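/- The double integral ∫_{-1}^0 ∫_0^1 (x+y)^2/(y-x)^{2} dy dx equals 3 - 4 ln 2. -/

import Mathlib

open Real MeasureTheory intervalIntegral

noncomputable def gAux (x : ℝ) : ℝ :=
  5 + 4*x*Real.log (1-x) + 4*((-x) * Real.log (-x)) - 4/(1-x)

noncomputable def GAux (x : ℝ) : ℝ :=
  3*x + (2*x^2+2)*Real.log (1-x) + 2*x*((-x)*Real.log (-x))

lemma gAux_contOn : ContinuousOn gAux (Set.Icc (-1:ℝ) 0) := by
  have h1 : ContinuousOn (fun x : ℝ => Real.log (1-x)) (Set.Icc (-1:ℝ) 0) := by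
    apply ContinuousOn.log (by fun_prop)
    intro x hx
    have := hx.2
    nlinarith [hx.1, hx.2]
  have h2 : Continuous (fun x : ℝ => (-x) * Real.log (-x)) :=
    Real.continuous_mul_log.comp continuous_neg
  have h3 : ContinuousOn (fun x : ℝ => 4/(1-x)) (Set.Icc (-1:ℝ) 0) := by
    apply ContinuousOn.div (by fun_prop) (by fun_prop)
    intro x hx; nlinarith [hx.1, hx.2]
  unfold gAux
  exact (((continuousOn_const.add ((by fun_prop : ContinuousOn (fun x:ℝ => 4*x) _).mul h1)).add
    (h2.continuousOn.const_smul 4 |>.congr (by intro x _; simp [smul_eq_mul]))).sub h3)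

lemma GAux_contOn : ContinuousOn GAux (Set.Icc (-1:ℝ) 0) := by
  have h1 : ContinuousOn (fun x : ℝ => Real.log (1-x)) (Set.Icc (-1:ℝ) 0) := by
    apply ContinuousOn.log (by fun_prop)
    intro x hx; nlinarith [hx.1, hx.2]
  have h2 : Continuous (fun x : ℝ => (-x) * Real.log (-x)) :=
    Real.continuous_mul_log.comp continuous_neg
  unfold GAux
  exact ((by fun_prop : ContinuousOn (fun x:ℝ => 3*x) _).add
    ((by fun_prop : ContinuousOn (fun x:ℝ => 2*x^2+2) _).mul h1)).add
    (((by fun_prop : ContinuousOn (fun x:ℝ => 2*x) _).mul h2.continuousOn))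

lemma inner_eq (x : ℝ) (hx : x ∈ Set.Ioo (-1:ℝ) 0) :
    (∫ y in (0:ℝ)..1, (x + y)^2 / (y - x) ^ (2:ℕ)) = gAux x := by
  have hx0 : x < 0 := hx.2
  set H : ℝ → ℝ := fun y => y + 4*x*Real.log (y-x) - 4*x^2/(y-x) with hH
  have hpos : ∀ y ∈ Set.uIcc (0:ℝ) 1, 0 < y - x := by
    intro y hy
    rw [Set.uIcc_of_le (by norm_num)] at hy
    linarith [hy.1]
  have hd : ∀ y ∈ Set.uIcc (0:ℝ) 1,
      HasDerivAt H ((x + y)^2 / (y - x) ^ (2:ℕ)) y := by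
    intro y hy
    have hne : y - x ≠ 0 := (hpos y hy).ne'
    have h1 : HasDerivAt (fun y : ℝ => Real.log (y - x)) (1/(y-x)) y := by
      simpa using (((hasDerivAt_id y).sub_const x).log hne)
    have h2 : HasDerivAt (fun y : ℝ => 4*x^2/(y-x))
        ((0*(y-x) - 4*x^2*1)/(y-x)^2) y :=
      (hasDerivAt_const y (4*x^2)).div ((hasDerivAt_id y).sub_const x) hne
    have := ((hasDerivAt_id y).add (h1.const_mul (4*x))).sub h2
    exact this.congr_deriv (by field_simp; ring)
  have hint : IntervalIntegrable (fun y => (x + y)^2 / (y - x) ^ (2:ℕ)) volume 0 1 := by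
    apply ContinuousOn.intervalIntegrable
    apply ContinuousOn.div (by fun_prop) (by fun_prop)
    intro y hy
    exact pow_ne_zero _ (hpos y hy).ne'
  rw [intervalIntegral.integral_eq_sub_of_hasDerivAt hd hint]
  have hx1 : (1:ℝ) - x ≠ 0 := by linarith
  have hxne : -x ≠ 0 := by linarith
  simp only [hH, gAux, zero_sub]
  field_simp
  ring_nf

lemma GAux_deriv (x : ℝ) (hx : x ∈ Set.Ioo (-1:ℝ) 0) :
    HasDerivAt GAux (gAux x) x := by
  have hx0 : x < 0 := hx.2
  have hx1 : (1:ℝ) - x ≠ 0 := by linarith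
  have hxne : x ≠ 0 := hx0.ne
  have h1 : HasDerivAt (fun x : ℝ => Real.log (1-x)) (-1/(1-x)) x := by
    simpa using (((hasDerivAt_id x).const_sub 1).log hx1)
  have h2 : HasDerivAt (fun x : ℝ => Real.log (-x)) (1/x) x := by
    have := (hasDerivAt_neg x).log (neg_ne_zero.2 hxne)
    convert this using 1
    field_simp
  have h3 : HasDerivAt (fun x : ℝ => 2*x^2+2) (2*(2*x)) x := by
    simpa using (((hasDerivAt_pow 2 x).const_mul 2).add_const 2)
  have h4 : HasDerivAt (fun x : ℝ => -(2*x^2)) (-(2*(2*x))) x := by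
    exact (((hasDerivAt_pow 2 x).const_mul 2).neg).congr_deriv (by norm_num)
  have key : HasDerivAt (fun x : ℝ => 3*x + (2*x^2+2)*Real.log (1-x) + (-(2*x^2))*Real.log (-x))
      (3 + ((2*(2*x))*Real.log (1-x) + (2*x^2+2)*(-1/(1-x))) +
        ((-(2*(2*x)))*Real.log (-x) + (-(2*x^2))*(1/x))) x := by
    have := (((hasDerivAt_id x).const_mul 3).add (h3.mul h1)).add (h4.mul h2)
    exact this.congr_deriv (by ring)
  have hfun : GAux = fun x : ℝ => 3*x + (2*x^2+2)*Real.log (1-x) + (-(2*x^2))*Real.log (-x) := by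
    funext t; unfold GAux; ring
  rw [hfun]
  convert key using 1
  unfold gAux
  field_simp
  ring

theorem stmt_12 :
    (∫ x in (-1:ℝ)..0, ∫ y in (0:ℝ)..1, (x + y)^2 / (y - x) ^ (2:ℕ))
      = 3 - 4 * Real.log 2 := by
  have h0 : ∀ᵐ x : ℝ ∂volume, x ≠ 0 := by
    rw [MeasureTheory.ae_iff]
    simp only [ne_eq, not_not]
    have : {x : ℝ | x = 0} = {(0:ℝ)} := by ext; simp
    rw [this]
    exact Real.volume_singleton
  have key : ∀ᵐ x ∂volume, x ∈ Set.uIoc (-1:ℝ) 0 →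
      (∫ y in (0:ℝ)..1, (x + y)^2 / (y - x) ^ (2:ℕ)) = gAux x := by
    filter_upwards [h0] with x hx hmem
    rw [Set.uIoc_of_le (by norm_num : (-1:ℝ) ≤ 0)] at hmem
    exact inner_eq x ⟨hmem.1, lt_of_le_of_ne hmem.2 hx⟩
  rw [intervalIntegral.integral_congr_ae key]
  have hle : (-1:ℝ) ≤ 0 := by norm_num
  have hint : IntervalIntegrable gAux volume (-1) 0 := by
    apply ContinuousOn.intervalIntegrable
    rw [Set.uIcc_of_le hle]
    exact gAux_contOn
  rw [intervalIntegral.integral_eq_sub_of_hasDeriv_right_of_le hle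
    GAux_contOn
    (fun x hx => (GAux_deriv x hx).hasDerivWithinAt) hint]
  have e0 : GAux 0 = 0 := by simp [GAux]
  have e1 : GAux (-1) = -3 + 4 * Real.log 2 := by
    simp [GAux]
    norm_num [show (1:ℝ) - (-1) = 2 by norm_num]
  rw [e0, e1]; ring
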